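/- In the Buffon needle problem, if a needle of length l is dropped uniformly at random onto a plane ruled with parallel lines a distance d apart, with l ≤ d, then the probability that the needle crosses a line equals 2l/(πd). More precisely, if the needle's center distance to the nearest line X is uniform on [0, d/2] and its angle Θ to the lines is uniform on [0, π), independent of X, then the probability that X ≤ (l/2)·sin Θ equals 2l/(πd). -/

import Mathlib

open MeasureTheory Real

/-- Buffon's needle: with center distance `X` uniform on `[0, d/2]` and angle `Θ`
uniform on `[0, π)`, independent, the probability that `X ≤ (l/2)·sin Θ`
equals `2l/(πd)`, provided `0 < l ≤ d`. -/
theorem buffon_needle (l d : ℝ) (hl : 0 < l) (hld : l ≤ d) :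
    Measure.prod
      ((ENNReal.ofReal (d / 2))⁻¹ • volume.restrict (Set.Icc (0 : ℝ) (d / 2)))
      ((ENNReal.ofReal π)⁻¹ • volume.restrict (Set.Ico (0 : ℝ) π))
      {p : ℝ × ℝ | p.1 ≤ l / 2 * Real.sin p.2}
      = ENNReal.ofReal (2 * l / (π * d)) := by
  have hd : 0 < d := hl.trans_le hld
  have hS : MeasurableSet {p : ℝ × ℝ | p.1 ≤ l / 2 * Real.sin p.2} :=
    measurableSet_le measurable_fst (by fun_prop)
  rw [Measure.prod_apply_symm hS]
  rw [lintegral_smul_measure]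
  have key : ∀ θ ∈ Set.Ico (0:ℝ) π,
      ((ENNReal.ofReal (d / 2))⁻¹ • volume.restrict (Set.Icc (0 : ℝ) (d / 2)))
        ((fun x => (x, θ)) ⁻¹' {p : ℝ × ℝ | p.1 ≤ l / 2 * Real.sin p.2})
      = (ENNReal.ofReal (d / 2))⁻¹ * ENNReal.ofReal (l / 2 * Real.sin θ) := by
    intro θ hθ
    have hsin : 0 ≤ Real.sin θ := Real.sin_nonneg_of_nonneg_of_le_pi hθ.1 hθ.2.le
    have hsle : Real.sin θ ≤ 1 := Real.sin_le_one θ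
    have h1 : (fun x : ℝ => (x, θ)) ⁻¹' {p : ℝ × ℝ | p.1 ≤ l / 2 * Real.sin p.2}
        = Set.Iic (l / 2 * Real.sin θ) := rfl
    have ha0 : 0 ≤ l / 2 * Real.sin θ := by positivity
    have had : l / 2 * Real.sin θ ≤ d / 2 := by nlinarith
    rw [h1, Measure.smul_apply, smul_eq_mul,
      Measure.restrict_apply measurableSet_Iic]
    have : Set.Iic (l / 2 * Real.sin θ) ∩ Set.Icc (0:ℝ) (d / 2)
        = Set.Icc 0 (l / 2 * Real.sin θ) := by
      ext x
      simp only [Set.mem_inter_iff, Set.mem_Iic, Set.mem_Icc]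
      constructor
      · rintro ⟨h1, h2, h3⟩; exact ⟨h2, h1⟩
      · rintro ⟨h1, h2⟩; exact ⟨h2, h1, h2.trans had⟩
    rw [this, Real.volume_Icc, sub_zero]
  rw [setLIntegral_congr_fun measurableSet_Ico
    key]
  rw [lintegral_const_mul _ (by fun_prop)]
  have hlint : ∫⁻ θ in Set.Ico (0:ℝ) π, ENNReal.ofReal (l / 2 * Real.sin θ)
      = ENNReal.ofReal l := by
    rw [← ofReal_integral_eq_lintegral_ofReal]
    · rw [setIntegral_congr_set MeasureTheory.Ico_ae_eq_Ioc,
        ← intervalIntegral.integral_of_le Real.pi_pos.le,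
        intervalIntegral.integral_const_mul, integral_sin]
      norm_num
    · exact ((Continuous.integrableOn_Icc (by fun_prop)).mono_set
        Set.Ico_subset_Icc_self)
    · filter_upwards [self_mem_ae_restrict measurableSet_Ico] with θ hθ
      have : 0 ≤ Real.sin θ := Real.sin_nonneg_of_nonneg_of_le_pi hθ.1 hθ.2.le
      positivity
  rw [hlint]
  rw [← ENNReal.ofReal_inv_of_pos (by positivity : (0:ℝ) < d / 2),
    ← ENNReal.ofReal_inv_of_pos Real.pi_pos,
    ← ENNReal.ofReal_mul (by positivity), smul_eq_mul, ← ENNReal.ofReal_mul (by positivity)]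
  congr 1
  field_simp
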